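/- arXiv:0708.1877 — 3 statements merged into one kernel-verified Lean document; each statement's English description precedes it below -/
import Mathlib

section
/- The k-th order empirical entropy is superadditive: for any strings s₁ and s₂ over a fixed alphabet and any integer k ≥ 0, |s₁s₂| · H_k(s₁s₂) ≥ |s₁| · H_k(s₁) + |s₂| · H_k(s₂). -/
/-- characters immediately following occurrences of context `w` in `s` -/
def follow {α : Type*} [DecidableEq α] (s w : List α) : List α :=
  s.tails.filterMap (fun t => if t.take w.length = w then (t.drop w.length).head? else none)

/-- zeroth-order empirical entropy (base 2), with the convention 0·log(·)=0 -/
noncomputable def H0 {σ : ℕ} (t : List (Fin σ)) : ℝ :=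
  ∑ a : Fin σ, ((t.count a : ℝ) / t.length) * Real.logb 2 ((t.length : ℝ) / t.count a)

/-- `|s| · H_k(s)`: sum over all contexts `w` of length `k` of `|s_w| · H_0(s_w)` -/
noncomputable def nHk {σ : ℕ} (s : List (Fin σ)) (k : ℕ) : ℝ :=
  ∑ w : Fin k → Fin σ,
    ((follow s (List.ofFn w)).length : ℝ) * H0 (follow s (List.ofFn w))

/-- `k`-th order empirical entropy -/
noncomputable def Hk {σ : ℕ} (s : List (Fin σ)) (k : ℕ) : ℝ := nHk s k / s.length

open Real

/-- Log-sum inequality (in superadditivity form). -/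
lemma logsum_aux (x y p q : ℝ) (hx : 0 ≤ x) (hy : 0 ≤ y) (hxp : x ≤ p) (hyq : y ≤ q) :
    x * logb 2 (p/x) + y * logb 2 (q/y) ≤ (x+y) * logb 2 ((p+q)/(x+y)) := by
  rcases eq_or_lt_of_le hx with rfl | hx
  · simp only [zero_mul, zero_add, zero_add]
    rcases eq_or_lt_of_le hy with rfl | hy
    · simp
    · have hq : 0 < q := lt_of_lt_of_le hy hyq
      have hp : 0 ≤ p := le_trans le_rfl hxp
      apply mul_le_mul_of_nonneg_left _ hy.le
      apply Real.logb_le_logb_of_le one_lt_two (by positivity)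
      apply div_le_div_of_nonneg_right (by linarith) hy.le
  rcases eq_or_lt_of_le hy with rfl | hy
  · simp only [zero_mul, add_zero, add_zero]
    have hp : 0 < p := lt_of_lt_of_le hx hxp
    have hq : 0 ≤ q := le_trans le_rfl hyq
    apply mul_le_mul_of_nonneg_left _ hx.le
    apply Real.logb_le_logb_of_le one_lt_two (by positivity)
    apply div_le_div_of_nonneg_right (by linarith) hx.le
  · have hp : 0 < p := lt_of_lt_of_le hx hxp
    have hq : 0 < q := lt_of_lt_of_le hy hyq
    have hs : 0 < x + y := by linarith
    have hpq : 0 < p + q := by linarith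
    have l2 : 0 < Real.log 2 := Real.log_pos one_lt_two
    rw [Real.logb, Real.logb, Real.logb, div_eq_mul_inv (Real.log _),
      div_eq_mul_inv (Real.log _), div_eq_mul_inv (Real.log _)]
    rw [← mul_assoc, ← mul_assoc, ← mul_assoc, ← add_mul]
    apply mul_le_mul_of_nonneg_right _ (by positivity)
    have key : ∀ a b : ℝ, 0 < a → 0 < b → a * Real.log (b / a) ≤ b - a := by
      intro a b ha hb
      have := Real.log_le_sub_one_of_pos (show (0:ℝ) < b / a by positivity)
      calc a * Real.log (b/a) ≤ a * (b/a - 1) := by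
            exact mul_le_mul_of_nonneg_left this ha.le
        _ = b - a := by field_simp
    have h1 : x * Real.log (p/x) - x * Real.log ((p+q)/(x+y)) ≤ p*(x+y)/(p+q) - x := by
      have hk := key x (p*(x+y)/(p+q)) hx (by positivity)
      calc x * Real.log (p/x) - x * Real.log ((p+q)/(x+y))
          = x * Real.log ((p*(x+y)/(p+q)) / x) := by
            rw [← mul_sub, ← Real.log_div (by positivity) (by positivity)]
            congr 2
            field_simp
        _ ≤ _ := hk
    have h2 : y * Real.log (q/y) - y * Real.log ((p+q)/(x+y)) ≤ q*(x+y)/(p+q) - y := by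
      have hk := key y (q*(x+y)/(p+q)) hy (by positivity)
      calc y * Real.log (q/y) - y * Real.log ((p+q)/(x+y))
          = y * Real.log ((q*(x+y)/(p+q)) / y) := by
            rw [← mul_sub, ← Real.log_div (by positivity) (by positivity)]
            congr 2
            field_simp
        _ ≤ _ := hk
    have hsum : p*(x+y)/(p+q) + q*(x+y)/(p+q) = x + y := by field_simp
    nlinarith [h1, h2]

lemma F_eq {σ : ℕ} (t : List (Fin σ)) :
    (t.length : ℝ) * H0 t
      = ∑ a : Fin σ, (t.count a : ℝ) * logb 2 ((t.length : ℝ) / t.count a) := by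
  rw [H0, Finset.mul_sum]
  apply Finset.sum_congr rfl
  intro a _
  rcases eq_or_ne (t.length : ℝ) 0 with h | h
  · have : t = [] := by simpa using h
    subst this; simp
  · field_simp

lemma sum_count_aux {σ : ℕ} (t : List (Fin σ)) : ∑ a : Fin σ, t.count a = t.length := by
  induction t with
  | nil => simp
  | cons b t ih => simp [List.count_cons, Finset.sum_add_distrib, ih]

/-- superadditivity of `|t| · H0 t` under sublists -/
lemma key_aux {σ : ℕ} (t₁ t₂ t : List (Fin σ)) (h : (t₁ ++ t₂).Sublist t) :
    (t₁.length : ℝ) * H0 t₁ + (t₂.length : ℝ) * H0 t₂ ≤ (t.length : ℝ) * H0 t := by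
  rw [F_eq, F_eq, F_eq, ← Finset.sum_add_distrib]
  set n₁ : ℝ := (t₁.length : ℝ) with hn₁
  set n₂ : ℝ := (t₂.length : ℝ) with hn₂
  set n : ℝ := (t.length : ℝ) with hn
  have hmn : n₁ + n₂ ≤ n := by
    have := h.length_le
    rw [List.length_append] at this
    rw [hn₁, hn₂, hn]
    exact_mod_cast this
  have hd : ∀ a : Fin σ, ((t₁.count a : ℝ) + t₂.count a) ≤ (t.count a : ℝ) := by
    intro a
    have := h.count_le a
    rw [List.count_append] at this
    exact_mod_cast this
  have hesum : ∑ a : Fin σ, ((t.count a : ℝ) - (t₁.count a + t₂.count a)) = n - (n₁ + n₂) := by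
    rw [Finset.sum_sub_distrib, Finset.sum_add_distrib]
    rw [hn, hn₁, hn₂, ← sum_count_aux t, ← sum_count_aux t₁, ← sum_count_aux t₂]
    push_cast
    ring
  calc ∑ a : Fin σ, ((t₁.count a : ℝ) * logb 2 (n₁ / t₁.count a)
          + (t₂.count a : ℝ) * logb 2 (n₂ / t₂.count a))
      ≤ ∑ a : Fin σ, ((t₁.count a : ℝ) + t₂.count a) * logb 2 ((n₁ + n₂) / ((t₁.count a : ℝ) + t₂.count a)) := by
        apply Finset.sum_le_sum
        intro a _
        exact logsum_aux _ _ _ _ (by positivity) (by positivity)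
          (by rw [hn₁]; exact_mod_cast (t₁.count_le_length : t₁.count a ≤ t₁.length))
          (by rw [hn₂]; exact_mod_cast (t₂.count_le_length : t₂.count a ≤ t₂.length))
    _ ≤ ∑ a : Fin σ, (t.count a : ℝ) * logb 2 (n / t.count a) := by
        apply Finset.sum_le_sum
        intro a _
        set x : ℝ := (t₁.count a : ℝ) + t₂.count a with hx
        set y : ℝ := (t.count a : ℝ) - x with hy
        have hy0 : 0 ≤ y := by
          have := hd a
          rw [hy]; linarith
        have hyle : y ≤ n - (n₁ + n₂) := by
          rw [← hesum]
          have he : ∀ b : Fin σ, 0 ≤ (t.count b : ℝ) - ((t₁.count b : ℝ) + t₂.count b) :=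
            fun b => by have := hd b; linarith
          exact Finset.single_le_sum (f := fun b => (t.count b : ℝ) - ((t₁.count b : ℝ) + t₂.count b))
            (fun b _ => he b) (Finset.mem_univ a)
        have hxle : x ≤ n₁ + n₂ := by
          rw [hx, hn₁, hn₂]
          have h1 : t₁.count a ≤ t₁.length := t₁.count_le_length
          have h2 : t₂.count a ≤ t₂.length := t₂.count_le_length
          exact add_le_add (by exact_mod_cast h1) (by exact_mod_cast h2)
        have step : x * logb 2 ((n₁+n₂)/x) + y * logb 2 ((n - (n₁+n₂))/y)
            ≤ (x + y) * logb 2 (((n₁+n₂) + (n - (n₁+n₂)))/(x+y)) :=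
          logsum_aux _ _ _ _ (by positivity) hy0 hxle hyle
        have hnonneg : 0 ≤ y * logb 2 ((n - (n₁+n₂))/y) := by
          rcases eq_or_lt_of_le hy0 with h0 | h0
          · rw [← h0]; simp
          · apply mul_nonneg hy0
            apply Real.logb_nonneg one_lt_two
            rw [le_div_iff₀ h0]
            linarith
        have hxy : x + y = (t.count a : ℝ) := by rw [hy]; ring
        have hpq : (n₁+n₂) + (n - (n₁+n₂)) = n := by ring
        rw [hxy, hpq] at step
        linarith

lemma g_nil_aux {α : Type*} [DecidableEq α] (w : List α) :
    (if (List.take w.length ([]:List α)) = w then (List.drop w.length ([]:List α)).head? else none)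
      = none := by
  split_ifs <;> simp

lemma follow_nil {α : Type*} [DecidableEq α] (w : List α) : follow ([] : List α) w = [] := by
  simp only [follow, List.tails, List.filterMap_cons, List.filterMap_nil, g_nil_aux]

lemma g_some_aux {α : Type*} [DecidableEq α] (w s₂ x : List α) (b : α)
    (h : (if x.take w.length = w then (x.drop w.length).head? else none) = some b) :
    (if (x ++ s₂).take w.length = w then ((x ++ s₂).drop w.length).head? else none) = some b := by
  split_ifs at h with h1
  have hne : x.drop w.length ≠ [] := by
    intro hnil
    rw [hnil] at h
    simp at h
  have hk : w.length ≤ x.length := by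
    by_contra hle
    push_neg at hle
    exact hne (List.drop_eq_nil_of_le hle.le)
  rw [List.take_append_of_le_length hk, List.drop_append_of_le_length hk]
  rw [if_pos h1, List.head?_append, h]
  rfl

lemma follow_append_sublist {α : Type*} [DecidableEq α] (s₁ s₂ w : List α) :
    (follow s₁ w ++ follow s₂ w).Sublist (follow (s₁ ++ s₂) w) := by
  induction s₁ with
  | nil =>
    rw [follow_nil, List.nil_append, List.nil_append]
  | cons a r ih =>
    simp only [follow, List.tails_cons, List.filterMap_cons, List.cons_append] at ih ⊢
    rcases hg : (if (a :: r).take w.length = w then ((a :: r).drop w.length).head? else none) with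
      _ | b
    · rcases hg2 : (if (a :: (r ++ s₂)).take w.length = w
          then ((a :: (r ++ s₂)).drop w.length).head? else none) with _ | c
      · exact ih
      · exact ih.trans (List.sublist_cons_self c _)
    · have h2 := g_some_aux w s₂ (a :: r) b hg
      rw [List.cons_append] at h2
      rw [h2]
      exact List.Sublist.cons₂ b ih

lemma mul_Hk_eq {σ : ℕ} (s : List (Fin σ)) (k : ℕ) :
    (s.length : ℝ) * Hk s k = nHk s k := by
  rcases eq_or_ne s [] with rfl | h
  · simp [Hk, nHk, follow_nil]
  · rw [Hk]
    have : (s.length : ℝ) ≠ 0 := by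
      simpa using h
    field_simp

/-- Superadditivity of k-th order empirical entropy:
|s₁s₂|·H_k(s₁s₂) ≥ |s₁|·H_k(s₁) + |s₂|·H_k(s₂). -/
theorem stmt_2 (σ k : ℕ) (s₁ s₂ : List (Fin σ)) :
    ((s₁ ++ s₂).length : ℝ) * Hk (s₁ ++ s₂) k ≥
      (s₁.length : ℝ) * Hk s₁ k + (s₂.length : ℝ) * Hk s₂ k := by
  rw [mul_Hk_eq, mul_Hk_eq, mul_Hk_eq, ge_iff_le, nHk, nHk, nHk, ← Finset.sum_add_distrib]
  apply Finset.sum_le_sum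
  intro w _
  exact key_aux _ _ _ (follow_append_sublist s₁ s₂ _)
end

section
/- Let d consist of all but the last k-1 characters of a linearized σ-ary de Bruijn sequence of order k, and let s be a concatenation of m ≥ 1 copies of d. Then H_k(s) = 0. -/
/-- linearized de Bruijn sequence -/
def IsLinDeBruijn (σ k : ℕ) (s : List (Fin σ)) : Prop :=
  ∀ w : List (Fin σ), w.length = k →
    ∃! i, i + k ≤ s.length ∧ (s.drop i).take k = w

private lemma aux_flatten_get {α : Type*} (p : List α) :
    ∀ (m i : ℕ), i < m * p.length →
      (List.replicate m p).flatten[i]? = p[i % p.length]? := by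
  intro m
  induction m with
  | zero => intro i h; simp at h
  | succ m ih =>
    intro i h
    rw [List.replicate_succ, List.flatten_cons, List.getElem?_append]
    by_cases hi : i < p.length
    · rw [if_pos hi, Nat.mod_eq_of_lt hi]
    · push_neg at hi
      rw [if_neg (by omega)]
      have hp : 0 < p.length := by
        rcases Nat.eq_zero_or_pos p.length with h0 | h0
        · rw [h0] at h; omega
        · exact h0
      rw [ih (i - p.length) (by rw [Nat.succ_mul] at h; omega),
        ← Nat.mod_eq_sub_mod hi]

private lemma H0_const {σ : ℕ} (t : List (Fin σ))
    (h : ∀ x ∈ t, ∀ y ∈ t, x = y) : H0 t = 0 := by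
  unfold H0
  apply Finset.sum_eq_zero
  intro a _
  rcases Nat.eq_zero_or_pos (t.count a) with h0 | h0
  · rw [h0]; simp
  · have ha : a ∈ t := List.count_pos_iff.mp h0
    have hc : t.count a = t.length := List.count_eq_length.mpr (fun b hb => h a ha b hb)
    have hl : (t.length : ℝ) ≠ 0 := by
      have : 0 < t.length := by omega
      exact_mod_cast this.ne'
    rw [hc, div_self hl, Real.logb_one, mul_zero]

/-- If d is all but the last k-1 characters of a linearized σ-ary de Bruijn
sequence of order k, and s is m ≥ 1 concatenated copies of d, then H_k(s) = 0. -/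
theorem stmt_4 (σ k m : ℕ) (hσ : 2 ≤ σ) (hk : 1 ≤ k) (hm : 1 ≤ m)
    (d : List (Fin σ)) (hlen : d.length = σ ^ k + k - 1)
    (hdb : IsLinDeBruijn σ k d)
    (hends : d.take (k - 1) = d.drop (d.length - (k - 1))) :
    Hk (List.replicate m (d.take (σ ^ k))).flatten k = 0 := by
  set n := σ ^ k with hn
  have hn1 : 1 ≤ n := Nat.one_le_pow _ _ (by omega)
  have hkn : k ≤ n := le_trans (Nat.lt_two_pow_self (n := k)).le (Nat.pow_le_pow_left hσ k)
  set p := d.take n with hpdef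
  have hp : p.length = n := by
    rw [hpdef, List.length_take, hlen]; omega
  set s := (List.replicate m p).flatten with hsdef
  have hs : s.length = m * n := by
    rw [hsdef, List.length_flatten, List.map_replicate, hp, List.sum_replicate,
      smul_eq_mul]
  -- d = p ++ p.take (k-1)
  have hd : d = p ++ p.take (k - 1) := by
    have h1 : d.length - (k - 1) = n := by omega
    have h2 : p.take (k - 1) = d.take (k - 1) := by
      rw [hpdef, List.take_take, min_eq_left (by omega)]
    calc d = d.take n ++ d.drop n := (List.take_append_drop n d).symm
    _ = p ++ p.take (k - 1) := by rw [h2, hends, h1]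
  have getS : ∀ i, i < m * n → s[i]? = p[i % n]? := by
    intro i hi
    rw [hsdef, aux_flatten_get p m i (by rw [hp]; exact hi), hp]
  have getD : ∀ j, j < n + k - 1 → d[j]? = p[j % n]? := by
    intro j hj
    rw [hd, List.getElem?_append, hp]
    by_cases hjn : j < n
    · rw [if_pos hjn, Nat.mod_eq_of_lt hjn]
    · push_neg at hjn
      rw [if_neg (by omega), List.getElem?_take, if_pos (by omega),
        Nat.mod_eq_sub_mod hjn, Nat.mod_eq_of_lt (by omega)]
  -- windows of s agree with windows of d at position mod n
  have winEq : ∀ i, i + k ≤ m * n → (s.drop i).take k = (d.drop (i % n)).take k := by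
    intro i hi
    apply List.ext_getElem?
    intro j
    rw [List.getElem?_take, List.getElem?_take, List.getElem?_drop, List.getElem?_drop]
    by_cases hj : j < k
    · rw [if_pos hj, if_pos hj, getS (i + j) (by omega),
        getD (i % n + j) (by have := Nat.mod_lt i (show 0 < n by omega); omega)]
      congr 1
      exact ((Nat.mod_modEq i n).add_right j).symm
    · rw [if_neg hj, if_neg hj]
  -- every member of follow s w comes from an occurrence position
  have hmem : ∀ (w : List (Fin σ)), w.length = k → ∀ x ∈ follow s w,
      ∃ i, i + k < m * n ∧ (s.drop i).take k = w ∧ s[i + k]? = some x := by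
    intro w hw x hx
    rw [follow, List.mem_filterMap] at hx
    obtain ⟨t, ht, hft⟩ := hx
    rw [List.mem_tails, List.suffix_iff_eq_drop] at ht
    refine ⟨s.length - t.length, ?_, ?_, ?_⟩ <;>
      [skip; skip; skip]
    all_goals {
      rw [ht, hw] at hft
      by_cases hc : (s.drop (s.length - t.length)).take k = w
      · rw [if_pos hc] at hft
        rw [List.drop_drop, List.head?_drop] at hft
        have hlt : s.length - t.length + k < s.length := by
          rcases List.getElem?_eq_some_iff.mp hft with ⟨hlt, _⟩
          omega
        first
        | (exact by omega)
        | (exact hc)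
        | (exact hft)
      · rw [if_neg hc] at hft; exact absurd hft (by simp)
    }
  -- all followers of a fixed context are equal
  have followEq : ∀ (w : List (Fin σ)), w.length = k →
      ∀ x ∈ follow s w, ∀ y ∈ follow s w, x = y := by
    intro w hw x hx y hy
    obtain ⟨i, hi, hwi, hxi⟩ := hmem w hw x hx
    obtain ⟨j, hj, hwj, hyj⟩ := hmem w hw y hy
    have hdi : (d.drop (i % n)).take k = w := by rw [← winEq i (by omega)]; exact hwi
    have hdj : (d.drop (j % n)).take k = w := by rw [← winEq j (by omega)]; exact hwj
    obtain ⟨r, _, hr⟩ := hdb w hw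
    have hin : i % n < n := Nat.mod_lt i (by omega)
    have hjn : j % n < n := Nat.mod_lt j (by omega)
    have hir : i % n = r := hr (i % n) ⟨by rw [hlen]; omega, hdi⟩
    have hjr : j % n = r := hr (j % n) ⟨by rw [hlen]; omega, hdj⟩
    have hmod : (i + k) % n = (j + k) % n := by
      rw [Nat.add_mod i k n, Nat.add_mod j k n, hir, hjr]
    have : some x = some y := by
      rw [← hxi, ← hyj, getS (i + k) hi, getS (j + k) hj, hmod]
    exact Option.some.inj this
  unfold Hk
  rw [show nHk s k = 0 from ?_, zero_div]
  unfold nHk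
  apply Finset.sum_eq_zero
  intro w _
  rw [H0_const _ (followEq (List.ofFn w) (List.length_ofFn (f := w))), mul_zero]
end

section
/- Let d be a string of length ℓ whose first k-1 characters equal its last k-1 characters, and suppose every k-tuple occurring in the cyclic string of d's first ℓ-(k-1) characters occurs exactly once. Then in s = d' d' ... d' (m copies of d', where d' is d without its last k-1 characters), every occurrence of each k-tuple is followed by a uniquely determined character (or the end of s). -/
theorem flatten_rep_getElem? {α : Type*} (l : List α) :
    ∀ (m j : ℕ), j < m * l.length →
      ((List.replicate m l).flatten)[j]? = l[j % l.length]? := by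
  intro m
  induction m with
  | zero => intro j hj; simp at hj
  | succ m ih =>
    intro j hj
    rw [List.replicate_succ, List.flatten_cons]
    by_cases h : j < l.length
    · rw [List.getElem?_append_left h, Nat.mod_eq_of_lt h]
    · push_neg at h
      rw [List.getElem?_append_right h, Nat.mod_eq_sub_mod h]
      refine ih (j - l.length) ?_
      rw [Nat.succ_mul] at hj
      omega

/-- In s = d'd'…d' (m copies of the first σ^k characters of a linearized
de Bruijn sequence d of order k), every occurrence of each k-tuple is followed
by a uniquely determined character (or the end of s). -/
theorem stmt_18 (σ k m : ℕ) (hσ : 2 ≤ σ) (hk : 1 ≤ k) (hm : 1 ≤ m)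
    (d : List (Fin σ)) (hlen : d.length = σ ^ k + k - 1)
    (hdb : IsLinDeBruijn σ k d)
    (hends : d.take (k - 1) = d.drop (d.length - (k - 1))) :
    ∀ w : List (Fin σ), w.length = k →
      ∀ a ∈ follow (List.replicate m (d.take (σ ^ k))).flatten w,
        ∀ b ∈ follow (List.replicate m (d.take (σ ^ k))).flatten w, a = b := by
  intro w hw a ha b hb
  set n := σ ^ k with hn
  have hkn : k < n := lt_of_lt_of_le (Nat.lt_two_pow_self (n := k)) (Nat.pow_le_pow_left hσ k)
  set d' := d.take n with hd'
  have hd'len : d'.length = n := by rw [hd', List.length_take, hlen]; omega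
  set s := (List.replicate m d').flatten with hs
  have hslen : s.length = m * n := by
    rw [hs, List.length_flatten, List.map_replicate, hd'len, List.sum_replicate, smul_eq_mul]
  -- s is the n-periodic extension of d, elementwise
  have hsget : ∀ j, j < m * n → s[j]? = d[j % n]? := by
    intro j hj
    rw [hs, flatten_rep_getElem? d' m j (by rw [hd'len]; exact hj), hd'len, hd',
      List.getElem?_take]
    simp [Nat.mod_lt j (by omega : 0 < n)]
  -- wrap-around property of d
  have hdwrap : ∀ q, q < k - 1 → d[n + q]? = d[q]? := by
    intro q hq
    have h1 : (d.take (k - 1))[q]? = d[q]? := by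
      rw [List.getElem?_take]; simp [hq]
    have h2 : (d.drop (d.length - (k - 1)))[q]? = d[n + q]? := by
      rw [List.getElem?_drop]
      congr 1
      omega
    rw [← h1, hends, h2]
  -- each window of s equals the corresponding window of d
  have hwin : ∀ i t, i + t < m * n → t < k → s[i + t]? = d[i % n + t]? := by
    intro i t hit ht
    set p := i % n with hp
    have hpn : p < n := Nat.mod_lt i (by omega)
    rw [hsget (i + t) hit]
    have hmod : (i + t) % n = (p + t) % n := ((Nat.mod_modEq i n).add_right t).symm
    rw [hmod]
    by_cases hc : p + t < n
    · rw [Nat.mod_eq_of_lt hc]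
    · push_neg at hc
      have h1 : (p + t) % n = p + t - n := by
        rw [Nat.mod_eq_sub_mod hc, Nat.mod_eq_of_lt (by omega)]
      rw [h1, ← hdwrap (p + t - n) (by omega)]
      congr 1
      omega
  -- every element of `follow s w` is determined by the unique occurrence in d
  have hocc : ∀ x, x ∈ follow s w →
      ∃ p, p + k ≤ d.length ∧ (d.drop p).take k = w ∧ d[(p + k) % n]? = some x := by
    intro x hx
    rw [follow, List.mem_filterMap] at hx
    obtain ⟨t, ht, hft⟩ := hx
    rw [hw] at hft
    split_ifs at hft with hcond
    obtain ⟨u, hu⟩ := (List.mem_tails _ _).mp ht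
    set i := u.length with hi
    have hti : t = s.drop i := by rw [hi, ← hu, List.drop_left]
    -- the follower
    have hfoll : s[i + k]? = some x := by
      rw [← List.getElem?_drop, ← List.head?_drop, ← hti]
      exact hft
    have hikl : i + k < m * n := by
      rw [← hslen]
      exact (List.getElem?_eq_some_iff.mp hfoll).1
    set p := i % n with hp
    have hpn : p < n := Nat.mod_lt i (by omega)
    refine ⟨p, by omega, ?_, ?_⟩
    · -- window of d at p equals w
      rw [← hcond, hti]
      refine List.ext_getElem? fun t' => ?_
      rw [List.getElem?_take, List.getElem?_take]
      by_cases ht' : t' < k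
      · simp only [ht', if_true, List.getElem?_drop]
        exact (hwin i t' (by omega) ht').symm
      · simp [ht']
    · have h1 := hsget (i + k) hikl
      have h2 : (i + k) % n = (p + k) % n := ((Nat.mod_modEq i n).add_right k).symm
      rw [← h2, ← h1]
      exact hfoll
  obtain ⟨p, hpk, hpw, hpa⟩ := hocc a ha
  obtain ⟨q, hqk, hqw, hqb⟩ := hocc b hb
  have hpq : p = q := (hdb w hw).unique ⟨hpk, hpw⟩ ⟨hqk, hqw⟩
  rw [hpq] at hpa
  exact Option.some.inj (hpa.symm.trans hqb)
end
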